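/- Let Γ be a finite connected simple graph on n ≥ 2 vertices whose adjacency matrix has spectral radius strictly less than 2. Then Γ contains no cycle (it is a tree) and has at most one vertex of degree ≥ 3. -/

import Mathlib

open SimpleGraph Finset Matrix

private lemma support_getElem_aux {V : Type} {G : SimpleGraph V} :
    ∀ {u v : V} (p : G.Walk u v) (i : ℕ) (h : i < p.support.length),
      p.support[i] = p.getVert i := by
  intro u v p
  induction p with
  | nil =>
    intro i h
    simp only [SimpleGraph.Walk.support_nil, List.length_singleton] at h
    interval_cases i
    simp
  | cons h' q ih =>
    intro i h
    cases i with
    | zero => simp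
    | succ n =>
      simp only [SimpleGraph.Walk.support_cons, List.getElem_cons_succ,
        SimpleGraph.Walk.getVert_cons_succ]
      apply ih

private lemma getVert_inj' {V : Type} {G : SimpleGraph V} {u v : V} {p : G.Walk u v}
    (hp : p.IsPath) {i j : ℕ} (hi : i ≤ p.length) (hj : j ≤ p.length)
    (h : p.getVert i = p.getVert j) : i = j := by
  have h1 : i < p.support.length := by rw [SimpleGraph.Walk.length_support]; omega
  have h2 : j < p.support.length := by rw [SimpleGraph.Walk.length_support]; omega
  have := (hp.support_nodup.getElem_inj_iff (hi := h1) (hj := h2))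
  rw [support_getElem_aux p i h1, support_getElem_aux p j h2] at this
  exact this.mp h

private lemma tail_getElem {V : Type} {G : SimpleGraph V} {u v : V} (p : G.Walk u v)
    (i : ℕ) (h : i < p.length) :
    p.support.tail[i]'(by simp [List.length_tail, SimpleGraph.Walk.length_support]; omega)
      = p.getVert (i + 1) := by
  rw [List.getElem_tail]
  exact support_getElem_aux p (i+1) (by rw [SimpleGraph.Walk.length_support]; omega)

private lemma getVert_mem_support' {V : Type} {G : SimpleGraph V} {u v : V} (p : G.Walk u v)
    {i : ℕ} (h : i ≤ p.length) : p.getVert i ∈ p.support :=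
  SimpleGraph.Walk.mem_support_iff_exists_getVert.mpr ⟨i, rfl, h⟩

private lemma cycle_two_nbrs {V : Type} [DecidableEq V] {G : SimpleGraph V} {v u : V}
    {c : G.Walk v v} (hc : c.IsCycle) (hu : u ∈ c.support) :
    ∃ a b, a ≠ b ∧ G.Adj u a ∧ G.Adj u b ∧ a ∈ c.support ∧ b ∈ c.support := by
  set c' := c.rotate u hu with hc'def
  have hc' : c'.IsCycle := hc.rotate hu
  have h3 : 3 ≤ c'.length := hc'.three_le_length
  have htail : ∀ z, z ∈ c'.support.tail → z ∈ c.support := by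
    intro z hz
    exact List.mem_of_mem_tail (((SimpleGraph.Walk.support_rotate c u hu).perm.mem_iff).mp hz)
  have hta : c'.support.tail[0]'(by simp [List.length_tail, SimpleGraph.Walk.length_support]; omega)
      = c'.getVert 1 := tail_getElem c' 0 (by omega)
  have htb : c'.support.tail[c'.length - 2]'(by
        simp [List.length_tail, SimpleGraph.Walk.length_support]; omega)
      = c'.getVert (c'.length - 1) := by
    have := tail_getElem c' (c'.length - 2) (by omega)
    rw [this]
    congr 1
    omega
  refine ⟨c'.getVert 1, c'.getVert (c'.length - 1), ?_, ?_, ?_, ?_, ?_⟩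
  · intro h
    rw [← hta, ← htb] at h
    have := (hc'.2.getElem_inj_iff).mp h
    omega
  · have := c'.adj_getVert_succ (i := 0) (by omega)
    simpa using this
  · have := c'.adj_getVert_succ (i := c'.length - 1) (by omega)
    have he : c'.length - 1 + 1 = c'.length := by omega
    rw [he, SimpleGraph.Walk.getVert_length] at this
    exact this.symm
  · exact htail _ (hta ▸ List.getElem_mem _)
  · exact htail _ (htb ▸ List.getElem_mem _)

private lemma nbr_on_path {V : Type} [DecidableEq V] {G : SimpleGraph V}
    (hac : G.IsAcyclic) {v w a : V} {p : G.Walk v w} (hp : p.IsPath)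
    (ha : G.Adj v a) (has : a ∈ p.support) : a = p.getVert 1 := by
  have h1 : (⟨p.takeUntil a has, hp.takeUntil has⟩ : G.Path v a) = SimpleGraph.Path.singleton ha :=
    hac.path_unique _ _
  have h1' : p.takeUntil a has = SimpleGraph.Walk.cons ha SimpleGraph.Walk.nil :=
    congrArg Subtype.val h1
  have h2 : p = SimpleGraph.Walk.cons ha (p.dropUntil a has) := by
    conv_lhs => rw [← SimpleGraph.Walk.take_spec p has]
    rw [h1']
    rfl
  rw [h2, SimpleGraph.Walk.getVert_cons _ _ one_ne_zero]
  simp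

private lemma no_good_vector
    {V : Type} [Fintype V] [DecidableEq V]
    (G : SimpleGraph V) [DecidableRel G.Adj]
    (hspec : ∀ μ : ℝ,
      Module.End.HasEigenvalue (Matrix.toLin' (G.adjMatrix ℝ)) μ → |μ| < 2)
    (x : V → ℝ) (hx0 : x ≠ 0) (hnn : ∀ u, 0 ≤ x u)
    (hineq : ∀ u, 2 * x u ≤ ∑ w ∈ G.neighborFinset u, x w) : False := by
  classical
  obtain ⟨v₀, hv₀⟩ := Function.ne_iff.mp hx0
  simp only [Pi.zero_apply] at hv₀
  haveI : Nonempty V := ⟨v₀⟩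
  set A := G.adjMatrix ℝ with hA
  have hHerm : A.IsHermitian := G.isSymm_adjMatrix
  have hSym : (Matrix.toEuclideanLin A).IsSymmetric :=
    Matrix.isHermitian_iff_isSymmetric.mp hHerm
  set T : EuclideanSpace ℝ V →ₗ[ℝ] EuclideanSpace ℝ V := Matrix.toEuclideanLin A with hT
  set x' : EuclideanSpace ℝ V := (WithLp.equiv 2 (V → ℝ)).symm x with hx'def
  have hx' : x' ≠ 0 := by
    intro h
    apply hv₀
    have := congrArg (fun z => (WithLp.equiv 2 (V → ℝ)) z v₀) h
    simpa [hx'def] using this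
  haveI : Nontrivial (EuclideanSpace ℝ V) := nontrivial_of_ne x' 0 hx'
  have hev := hSym.hasEigenvalue_iSup_of_finiteDimensional
  -- transfer eigenvalue to toLin'
  set μ : ℝ := (⨆ z : { z : EuclideanSpace ℝ V // z ≠ 0 },
      RCLike.re (inner ℝ (T z) (z : EuclideanSpace ℝ V) : ℝ) / ‖(z : EuclideanSpace ℝ V)‖ ^ 2) with hμ
  obtain ⟨y, hy⟩ := Module.End.HasEigenvalue.exists_hasEigenvector hev
  have h1 : T y = μ • y := Module.End.mem_eigenspace_iff.mp hy.1
  have h2 : Module.End.HasEigenvalue (Matrix.toLin' A) μ := by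
    apply Module.End.hasEigenvalue_of_hasEigenvector
      (x := (WithLp.equiv 2 (V → ℝ)) y)
    refine ⟨Module.End.mem_eigenspace_iff.mpr ?_, ?_⟩
    · exact congrArg WithLp.ofLp h1
    · intro h
      exact hy.2 (by simpa using congrArg (WithLp.equiv 2 (V → ℝ)).symm h)
  have hlt : |μ| < 2 := hspec μ h2
  -- lower bound
  have hnormpos : (0:ℝ) < ‖x'‖ ^ 2 := by
    have : ‖x'‖ ≠ 0 := norm_ne_zero_iff.mpr hx'
    positivity
  have hinner : (inner ℝ (T x') x' : ℝ) = ∑ u, (∑ w ∈ G.neighborFinset u, x w) * x u := by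
    rw [PiLp.inner_apply]
    refine Finset.sum_congr rfl fun u _ => ?_
    have h3 : T x' u = ∑ w ∈ G.neighborFinset u, x w := by
      show (A *ᵥ x) u = _
      rw [hA, SimpleGraph.adjMatrix_mulVec_apply]
    rw [RCLike.inner_apply, conj_trivial, h3]
    exact mul_comm _ _
  have hlow : (2:ℝ) * ‖x'‖ ^ 2 ≤ (inner ℝ (T x') x' : ℝ) := by
    have hns : (‖x'‖:ℝ) ^ 2 = ∑ u, x u * x u := by
      rw [← real_inner_self_eq_norm_sq, PiLp.inner_apply]
      refine Finset.sum_congr rfl fun u _ => ?_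
      rw [RCLike.inner_apply, conj_trivial]
      rfl
    rw [hinner, hns, Finset.mul_sum]
    refine Finset.sum_le_sum fun u _ => ?_
    have := mul_le_mul_of_nonneg_right (hineq u) (hnn u)
    calc 2 * (x u * x u) = 2 * x u * x u := by ring
      _ ≤ _ := this
  have hray : (2:ℝ) ≤ RCLike.re (inner ℝ (T x') x' : ℝ) / ‖x'‖ ^ 2 := by
    rw [RCLike.re_to_real, le_div_iff₀ hnormpos]
    linarith
  have hbdd : BddAbove (Set.range fun z : { z : EuclideanSpace ℝ V // z ≠ 0 } =>
      RCLike.re (inner ℝ (T z) (z : EuclideanSpace ℝ V) : ℝ) / ‖(z : EuclideanSpace ℝ V)‖ ^ 2) := by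
    refine ⟨‖LinearMap.toContinuousLinearMap T‖, ?_⟩
    rintro r ⟨z, rfl⟩
    have hz : (0:ℝ) < ‖(z : EuclideanSpace ℝ V)‖ ^ 2 := by
      have : ‖(z : EuclideanSpace ℝ V)‖ ≠ 0 := norm_ne_zero_iff.mpr z.2
      positivity
    dsimp only
    rw [RCLike.re_to_real, div_le_iff₀ hz]
    have hTz : ‖T (z : EuclideanSpace ℝ V)‖ ≤ ‖LinearMap.toContinuousLinearMap T‖ * ‖(z : EuclideanSpace ℝ V)‖ := by
      have := (LinearMap.toContinuousLinearMap T).le_opNorm (z : EuclideanSpace ℝ V)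
      simpa using this
    calc (inner ℝ (T z) (z : EuclideanSpace ℝ V) : ℝ)
        ≤ ‖T (z : EuclideanSpace ℝ V)‖ * ‖(z : EuclideanSpace ℝ V)‖ := real_inner_le_norm _ _
      _ ≤ ‖LinearMap.toContinuousLinearMap T‖ * ‖(z : EuclideanSpace ℝ V)‖ * ‖(z : EuclideanSpace ℝ V)‖ := by
          apply mul_le_mul_of_nonneg_right hTz (norm_nonneg _)
      _ = ‖LinearMap.toContinuousLinearMap T‖ * ‖(z : EuclideanSpace ℝ V)‖ ^ 2 := by ring
  have h2μ : (2:ℝ) ≤ μ := by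
    rw [hμ]
    exact le_trans hray (le_ciSup hbdd ⟨x', hx'⟩)
  linarith [le_abs_self μ, hlt]

theorem spectral_radius_lt_two_implies_tree_with_one_branch_vertex
    (V : Type) [Fintype V] [DecidableEq V]
    (G : SimpleGraph V) [DecidableRel G.Adj]
    (hconn : G.Connected) (hcard : 2 ≤ Fintype.card V)
    (hspec : ∀ μ : ℝ,
      Module.End.HasEigenvalue (Matrix.toLin' (G.adjMatrix ℝ)) μ → |μ| < 2) :
    G.IsAcyclic ∧ ∀ v w : V, 3 ≤ G.degree v → 3 ≤ G.degree w → v = w := by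
  classical
  have hac : G.IsAcyclic := by
    by_contra h
    unfold SimpleGraph.IsAcyclic at h
    push_neg at h
    obtain ⟨v, c, hc⟩ := h
    set x : V → ℝ := fun u => if u ∈ c.support then 1 else 0 with hxdef
    have hnn : ∀ u, 0 ≤ x u := by
      intro u; rw [hxdef]; dsimp only; split <;> norm_num
    refine no_good_vector G hspec x ?_ hnn ?_
    · intro h0
      have := congrFun h0 v
      simp [hxdef, SimpleGraph.Walk.start_mem_support] at this
    · intro u
      by_cases hu : u ∈ c.support
      · obtain ⟨a, b, hab, hua, hub, has, hbs⟩ := cycle_two_nbrs hc hu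
        have hsub : ({a, b} : Finset V) ⊆ G.neighborFinset u := by
          intro z hz
          rw [SimpleGraph.mem_neighborFinset]
          rcases Finset.mem_insert.mp hz with h | h
          · exact h ▸ hua
          · exact (Finset.mem_singleton.mp h) ▸ hub
        have h1 : 2 * x u = ∑ z ∈ ({a, b} : Finset V), x z := by
          rw [Finset.sum_pair hab, hxdef]
          simp only [hu, has, hbs, if_pos]
          norm_num
        rw [h1]
        exact Finset.sum_le_sum_of_subset_of_nonneg hsub fun z _ _ => hnn z
      · have h1 : x u = 0 := by rw [hxdef]; simp [hu]
        rw [h1]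
        simpa using Finset.sum_nonneg fun z _ => hnn z
  refine ⟨hac, fun v w hv hw => ?_⟩
  by_contra hvw
  obtain ⟨p0⟩ := hconn v w
  set p : G.Walk v w := (p0.toPath : G.Path v w).val with hpdef
  have hp : p.IsPath := p0.toPath.2
  have hlen : 1 ≤ p.length := by
    rcases Nat.eq_zero_or_pos p.length with h | h
    · exact absurd (p.eq_of_length_eq_zero h) hvw
    · omega
  set q : G.Walk w v := p.reverse with hqdef
  have hq : q.IsPath := hp.reverse
  have hqlen : 1 ≤ q.length := by rw [hqdef, SimpleGraph.Walk.length_reverse]; exact hlen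
  have hqsupp : ∀ z, z ∈ q.support ↔ z ∈ p.support := by
    intro z; rw [hqdef, SimpleGraph.Walk.support_reverse, List.mem_reverse]
  -- two extra neighbors of v
  have hcv : 1 < ((G.neighborFinset v).erase (p.getVert 1)).card := by
    have h1 : 3 ≤ (G.neighborFinset v).card := hv
    have h2 := Finset.pred_card_le_card_erase (s := G.neighborFinset v) (a := p.getVert 1)
    omega
  obtain ⟨a1, a2, ha1, ha2, ha12⟩ := Finset.one_lt_card_iff.mp hcv
  have ha1adj : G.Adj v a1 := (SimpleGraph.mem_neighborFinset _ _ _).mp (Finset.mem_of_mem_erase ha1)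
  have ha2adj : G.Adj v a2 := (SimpleGraph.mem_neighborFinset _ _ _).mp (Finset.mem_of_mem_erase ha2)
  have ha1s : a1 ∉ p.support := fun h => (Finset.ne_of_mem_erase ha1) (nbr_on_path hac hp ha1adj h)
  have ha2s : a2 ∉ p.support := fun h => (Finset.ne_of_mem_erase ha2) (nbr_on_path hac hp ha2adj h)
  -- two extra neighbors of w
  have hcw : 1 < ((G.neighborFinset w).erase (q.getVert 1)).card := by
    have h1 : 3 ≤ (G.neighborFinset w).card := hw
    have h2 := Finset.pred_card_le_card_erase (s := G.neighborFinset w) (a := q.getVert 1)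
    omega
  obtain ⟨b1, b2, hb1, hb2, hb12⟩ := Finset.one_lt_card_iff.mp hcw
  have hb1adj : G.Adj w b1 := (SimpleGraph.mem_neighborFinset _ _ _).mp (Finset.mem_of_mem_erase hb1)
  have hb2adj : G.Adj w b2 := (SimpleGraph.mem_neighborFinset _ _ _).mp (Finset.mem_of_mem_erase hb2)
  have hb1s : b1 ∉ p.support := fun h =>
    (Finset.ne_of_mem_erase hb1) (nbr_on_path hac hq hb1adj ((hqsupp b1).mpr h))
  have hb2s : b2 ∉ p.support := fun h =>
    (Finset.ne_of_mem_erase hb2) (nbr_on_path hac hq hb2adj ((hqsupp b2).mpr h))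
  -- the test vector
  set x : V → ℝ := fun u =>
    if u ∈ p.support then 1 else if u = a1 ∨ u = a2 ∨ u = b1 ∨ u = b2 then 1/2 else 0 with hxdef
  have hnn : ∀ u, 0 ≤ x u := by
    intro u; rw [hxdef]; dsimp only; split
    · norm_num
    · split <;> norm_num
  have hxsupp : ∀ u, u ∈ p.support → x u = 1 := by
    intro u hu; rw [hxdef]; simp [hu]
  have hxleaf : ∀ u, u ∉ p.support → (u = a1 ∨ u = a2 ∨ u = b1 ∨ u = b2) → x u = 1/2 := by
    intro u hu hL; rw [hxdef]; simp [hu, hL]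
  refine no_good_vector G hspec x ?_ hnn ?_
  · intro h0
    have := congrFun h0 v
    rw [hxsupp v p.start_mem_support] at this
    norm_num at this
  · intro u
    by_cases hu : u ∈ p.support
    · rw [hxsupp u hu]
      by_cases huv : u = v
      · subst huv
        have hg1s : p.getVert 1 ∈ p.support := getVert_mem_support' p hlen
        have hg1a : G.Adj u (p.getVert 1) := by
          have := p.adj_getVert_succ (i := 0) (by omega)
          simpa using this
        have hane : a1 ≠ p.getVert 1 := Finset.ne_of_mem_erase ha1
        have hane2 : a2 ≠ p.getVert 1 := Finset.ne_of_mem_erase ha2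
        have hsub : (insert a1 (insert a2 {p.getVert 1}) : Finset V) ⊆ G.neighborFinset u := by
          intro z hz
          rw [SimpleGraph.mem_neighborFinset]
          simp only [Finset.mem_insert, Finset.mem_singleton] at hz
          rcases hz with h | h | h
          · exact h ▸ ha1adj
          · exact h ▸ ha2adj
          · exact h ▸ hg1a
        have hsum : ∑ z ∈ (insert a1 (insert a2 {p.getVert 1}) : Finset V), x z = 2 := by
          rw [Finset.sum_insert (by simp [ha12, hane]),
            Finset.sum_insert (by simp [hane2]), Finset.sum_singleton,
            hxleaf a1 ha1s (Or.inl rfl), hxleaf a2 ha2s (Or.inr (Or.inl rfl)),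
            hxsupp _ hg1s]
          norm_num
        calc (2:ℝ) * 1 = ∑ z ∈ (insert a1 (insert a2 {p.getVert 1}) : Finset V), x z := by
              rw [hsum]; norm_num
          _ ≤ ∑ z ∈ G.neighborFinset u, x z :=
              Finset.sum_le_sum_of_subset_of_nonneg hsub fun z _ _ => hnn z
      · by_cases huw : u = w
        · subst huw
          have hg1s : q.getVert 1 ∈ p.support :=
            (hqsupp _).mp (getVert_mem_support' q hqlen)
          have hg1a : G.Adj u (q.getVert 1) := by
            have := q.adj_getVert_succ (i := 0) (by omega)
            simpa using this
          have hbne : b1 ≠ q.getVert 1 := Finset.ne_of_mem_erase hb1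
          have hbne2 : b2 ≠ q.getVert 1 := Finset.ne_of_mem_erase hb2
          have hsub : (insert b1 (insert b2 {q.getVert 1}) : Finset V) ⊆ G.neighborFinset u := by
            intro z hz
            rw [SimpleGraph.mem_neighborFinset]
            simp only [Finset.mem_insert, Finset.mem_singleton] at hz
            rcases hz with h | h | h
            · exact h ▸ hb1adj
            · exact h ▸ hb2adj
            · exact h ▸ hg1a
          have hsum : ∑ z ∈ (insert b1 (insert b2 {q.getVert 1}) : Finset V), x z = 2 := by
            rw [Finset.sum_insert (by simp [hb12, hbne]),
              Finset.sum_insert (by simp [hbne2]), Finset.sum_singleton,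
              hxleaf b1 hb1s (Or.inr (Or.inr (Or.inl rfl))),
              hxleaf b2 hb2s (Or.inr (Or.inr (Or.inr rfl))),
              hxsupp _ hg1s]
            norm_num
          calc (2:ℝ) * 1 = ∑ z ∈ (insert b1 (insert b2 {q.getVert 1}) : Finset V), x z := by
                rw [hsum]; norm_num
            _ ≤ ∑ z ∈ G.neighborFinset u, x z :=
                Finset.sum_le_sum_of_subset_of_nonneg hsub fun z _ _ => hnn z
        · -- interior vertex of the path
          obtain ⟨i, hgv, hil⟩ := SimpleGraph.Walk.mem_support_iff_exists_getVert.mp hu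
          have hi0 : i ≠ 0 := by
            intro h
            exact huv (by rw [← hgv, h, SimpleGraph.Walk.getVert_zero])
          have hiL : i ≠ p.length := by
            intro h
            exact huw (by rw [← hgv, h, SimpleGraph.Walk.getVert_length])
          have hadj1 : G.Adj u (p.getVert (i - 1)) := by
            have h1 := p.adj_getVert_succ (i := i - 1) (by omega)
            have he : i - 1 + 1 = i := by omega
            rw [he, hgv] at h1
            exact h1.symm
          have hadj2 : G.Adj u (p.getVert (i + 1)) := by
            have h1 := p.adj_getVert_succ (i := i) (by omega)
            rw [hgv] at h1
            exact h1
          have hne : p.getVert (i - 1) ≠ p.getVert (i + 1) := by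
            intro h
            have := getVert_inj' hp (by omega : i - 1 ≤ p.length)
              (by omega : i + 1 ≤ p.length) h
            omega
          have hm1 : p.getVert (i - 1) ∈ p.support := getVert_mem_support' p (by omega)
          have hm2 : p.getVert (i + 1) ∈ p.support := getVert_mem_support' p (by omega)
          have hsub : ({p.getVert (i - 1), p.getVert (i + 1)} : Finset V) ⊆
              G.neighborFinset u := by
            intro z hz
            rw [SimpleGraph.mem_neighborFinset]
            rcases Finset.mem_insert.mp hz with h | h
            · exact h ▸ hadj1
            · exact (Finset.mem_singleton.mp h) ▸ hadj2
          calc (2:ℝ) * 1 = ∑ z ∈ ({p.getVert (i - 1), p.getVert (i + 1)} : Finset V), x z := by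
                rw [Finset.sum_pair hne, hxsupp _ hm1, hxsupp _ hm2]; norm_num
            _ ≤ ∑ z ∈ G.neighborFinset u, x z :=
                Finset.sum_le_sum_of_subset_of_nonneg hsub fun z _ _ => hnn z
    · by_cases hL : u = a1 ∨ u = a2 ∨ u = b1 ∨ u = b2
      · rw [hxleaf u hu hL]
        have hkey : ∃ z, z ∈ G.neighborFinset u ∧ x z = 1 := by
          rcases hL with h | h | h | h
          · exact ⟨v, (SimpleGraph.mem_neighborFinset _ _ _).mpr (h ▸ ha1adj).symm,
              hxsupp v p.start_mem_support⟩
          · exact ⟨v, (SimpleGraph.mem_neighborFinset _ _ _).mpr (h ▸ ha2adj).symm,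
              hxsupp v p.start_mem_support⟩
          · exact ⟨w, (SimpleGraph.mem_neighborFinset _ _ _).mpr (h ▸ hb1adj).symm,
              hxsupp w p.end_mem_support⟩
          · exact ⟨w, (SimpleGraph.mem_neighborFinset _ _ _).mpr (h ▸ hb2adj).symm,
              hxsupp w p.end_mem_support⟩
        obtain ⟨z, hz, hz1⟩ := hkey
        have := Finset.single_le_sum (f := x) (fun t _ => hnn t) hz
        rw [hz1] at this
        linarith
      · have h1 : x u = 0 := by rw [hxdef]; simp [hu, hL]
        rw [h1]
        simpa using Finset.sum_nonneg fun z _ => hnn z
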